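/- Let n, m be natural numbers, let Ã be a symmetric real n×n matrix such that I − Ã is positive semidefinite, let γ ∈ (0,1), and let S be a real n×m matrix. Define the graph-signal-denoising objective L_GSD(F) = tr((F − S)ᵀ(F − S)) + (1/(1−γ) − 1)·tr(Fᵀ(I − Ã)F) for real n×m matrices F. Then the matrix F* = (1−γ)·(I − γÃ)⁻¹·S satisfies L_GSD(F*) ≤ L_GSD(F) for every real n×m matrix F. -/

import Mathlib

open Matrix

/-- The graph-signal-denoising objective
`L_GSD(F) = tr((F − S)ᵀ(F − S)) + (1/(1−γ) − 1)·tr(Fᵀ(I − Ã)F)`. -/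
noncomputable def LGSD {n m : ℕ} (Atil : Matrix (Fin n) (Fin n) ℝ) (γ : ℝ)
    (S F : Matrix (Fin n) (Fin m) ℝ) : ℝ :=
  ((F - S)ᵀ * (F - S)).trace + (1 / (1 - γ) - 1) * (Fᵀ * (1 - Atil) * F).trace

/-- The PPNP propagation `F* = (1−γ)(I − γÃ)⁻¹ S` minimizes the
graph-signal-denoising objective. -/
theorem ppnp_solves_gsd (n m : ℕ) (Atil : Matrix (Fin n) (Fin n) ℝ)
    (hsym : Atil.IsSymm) (hpsd : (1 - Atil).PosSemidef)
    (γ : ℝ) (hγ : γ ∈ Set.Ioo (0 : ℝ) 1)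
    (S : Matrix (Fin n) (Fin m) ℝ) :
    ∀ F : Matrix (Fin n) (Fin m) ℝ,
      LGSD Atil γ S ((1 - γ) • ((1 - γ • Atil)⁻¹ * S)) ≤ LGSD Atil γ S F := by
  obtain ⟨hγ0, hγ1⟩ := hγ
  have h1γ : (0:ℝ) < 1 - γ := by linarith
  set α : ℝ := 1 / (1 - γ) - 1 with hα
  have hαpos : 0 < α := by
    rw [hα]
    rw [lt_sub_iff_add_lt, zero_add, lt_div_iff₀ h1γ]
    nlinarith
  set M : Matrix (Fin n) (Fin n) ℝ := 1 + α • (1 - Atil) with hM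
  -- M is symmetric
  have hMsym : Mᵀ = M := by
    rw [hM]
    simp [Matrix.transpose_add, Matrix.transpose_smul, Matrix.transpose_sub, hsym.eq]
  -- positive definiteness of 1 - γ • Atil
  have hposdef : (1 - γ • Atil).PosDef := by
    rw [Matrix.posDef_iff_dotProduct_mulVec]
    constructor
    · show (1 - γ • Atil)ᴴ = _
      rw [Matrix.conjTranspose_eq_transpose_of_trivial]
      simp [Matrix.transpose_sub, Matrix.transpose_smul, hsym.eq]
    · intro x hx
      have h2 := hpsd.dotProduct_mulVec_nonneg x
      simp only [star_trivial] at h2 ⊢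
      have hx2 : 0 < x ⬝ᵥ x := by
        rcases (dotProduct_self_star_pos_iff (v := x)).2 hx with h
        simpa using h
      have hexp : x ⬝ᵥ ((1 - γ • Atil) *ᵥ x)
          = (1 - γ) * (x ⬝ᵥ x) + γ * (x ⬝ᵥ ((1 - Atil) *ᵥ x)) := by
        simp only [Matrix.sub_mulVec, Matrix.smul_mulVec, Matrix.one_mulVec,
          dotProduct_sub, dotProduct_smul, smul_eq_mul, dotProduct_add]
        ring
      rw [hexp]
      have := mul_nonneg hγ0.le h2
      nlinarith
  set G : Matrix (Fin n) (Fin m) ℝ := (1 - γ) • ((1 - γ • Atil)⁻¹ * S) with hG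
  -- M = (1/(1-γ)) • (1 - γ • Atil)
  have hMeq : M = (1 / (1 - γ)) • (1 - γ • Atil) := by
    rw [hM]
    ext i j
    simp only [Matrix.add_apply, Matrix.smul_apply, Matrix.sub_apply, Matrix.one_apply,
      smul_eq_mul]
    by_cases h : i = j <;> simp [h, hα] <;> field_simp <;> ring
  -- M * G = S
  have hMG : M * G = S := by
    rw [hMeq, hG, Matrix.smul_mul, Matrix.mul_smul, smul_smul, ← Matrix.mul_assoc,
      Matrix.mul_nonsing_inv _ (isUnit_iff_ne_zero.2 hposdef.det_pos.ne'), Matrix.one_mul]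
    have : 1 / (1 - γ) * (1 - γ) = 1 := by field_simp
    rw [this, one_smul]
  have hGM : Gᵀ * M = Sᵀ := by
    have := congrArg Matrix.transpose hMG
    rwa [Matrix.transpose_mul, hMsym] at this
  intro F
  -- key identity: LGSD F - LGSD G = tr((F-G)ᵀ M (F-G))
  have hLGSD : ∀ X : Matrix (Fin n) (Fin m) ℝ,
      LGSD Atil γ S X = ((X - S)ᵀ * (X - S)).trace + (Xᵀ * M * X).trace - (Xᵀ * X).trace := by
    intro X
    rw [LGSD, hM]
    simp only [Matrix.add_mul, Matrix.mul_add, Matrix.one_mul, Matrix.mul_one,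
      Matrix.smul_mul, Matrix.mul_smul, trace_add, trace_smul, smul_eq_mul]
    ring
  have key : LGSD Atil γ S F - LGSD Atil γ S G = ((F - G)ᵀ * M * (F - G)).trace := by
    rw [hLGSD F, hLGSD G]
    have e1 : (Fᵀ * (M * G)).trace = (Fᵀ * S).trace := by rw [hMG]
    have e2 : (Gᵀ * M * F).trace = (Sᵀ * F).trace := by rw [hGM]
    have e3 : (Sᵀ * F).trace = (Fᵀ * S).trace := by
      rw [← Matrix.trace_transpose (Sᵀ * F), Matrix.transpose_mul, Matrix.transpose_transpose]
    have e4 : (Gᵀ * S).trace = (Sᵀ * G).trace := by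
      rw [← Matrix.trace_transpose (Gᵀ * S), Matrix.transpose_mul, Matrix.transpose_transpose]
    have e5 : (Gᵀ * (M * G)).trace = (Gᵀ * S).trace := by rw [hMG]
    have e6 : (Gᵀ * M * G).trace = (Sᵀ * G).trace := by rw [hGM]
    simp only [Matrix.sub_mul, Matrix.mul_sub, Matrix.transpose_sub, trace_sub,
      Matrix.mul_assoc] at *
    linarith
  have hnonneg : 0 ≤ ((F - G)ᵀ * M * (F - G)).trace := by
    have hMpsd : M.PosSemidef := by
      rw [Matrix.posSemidef_iff_dotProduct_mulVec]
      constructor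
      · show Mᴴ = M
        rw [Matrix.conjTranspose_eq_transpose_of_trivial]
        exact hMsym
      · intro x
        have h2 := hpsd.dotProduct_mulVec_nonneg x
        simp only [star_trivial] at h2 ⊢
        have hexp : x ⬝ᵥ (M *ᵥ x) = (x ⬝ᵥ x) + α * (x ⬝ᵥ ((1 - Atil) *ᵥ x)) := by
          rw [hM]
          simp only [Matrix.add_mulVec, Matrix.smul_mulVec, Matrix.one_mulVec,
            dotProduct_add, dotProduct_smul, smul_eq_mul]
        rw [hexp]
        have hx2 : 0 ≤ x ⬝ᵥ x := by
          have := dotProduct_self_star_nonneg x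
          simpa using this
        nlinarith
    have hP := hMpsd.conjTranspose_mul_mul_same (F - G)
    rw [Matrix.conjTranspose_eq_transpose_of_trivial] at hP
    rw [Matrix.trace]
    refine Finset.sum_nonneg fun j _ => ?_
    have := hP.dotProduct_mulVec_nonneg (Pi.single j 1)
    simpa [Matrix.mulVec_single, dotProduct, Pi.single_apply, Finset.sum_ite_eq,
      Matrix.diag_apply] using this
  linarith
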